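/- Let M_t = ∫₀^t U dB be the martingale from the construction with terminal value ±π (each with probability ½), and define Y¹_t = cos(M_t) + 1, Y²_t = sin(M_t). Then by Itô's formula, (Y¹, Y²) has dynamics dY¹ = −sin(M) U dB − ½ cos(M) U² dt and dY² = cos(M) U dB − ½ sin(M) U² dt; moreover Y¹_T = Y²_T = 0 almost surely, while (Y¹, Y²) is not identically zero. -/

import Mathlib

open MeasureTheory

noncomputable section

/-- **Dynamics and non-triviality of the sphere-martingale example.**
Let `B` be a one-dimensional Brownian motion on `[0,T]`, `η = π` if `B_T ≥ 0` and
`η = −π` otherwise, and `M_t = E[η | ℱ_t] = ∫₀^t U dB`.  The Itô calculus is encoded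
through an abstract predicate `Solves P b σ` (meaning `dP = b dt + σ dB`), assumed to
satisfy Itô's formula for `C²` functions of `M` and to be invariant under adding
constants.  Setting `Y¹ = cos(M) + 1` and `Y² = sin(M)`, we have the dynamics
`dY¹ = −½ cos(M) U² dt − sin(M) U dB` and `dY² = −½ sin(M) U² dt + cos(M) U dB`;
moreover `Y¹_T = Y²_T = 0` a.s., while `(Y¹, Y²)` is not identically zero. -/
theorem stmt14 {Ω : Type*} {m0 : MeasurableSpace Ω} (μ : Measure Ω)
    [IsProbabilityMeasure μ] (ℱ : Filtration ℝ m0) (T : ℝ) (hT : 0 < T)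
    (B U : ℝ → Ω → ℝ) (η : Ω → ℝ)
    (hη : η = fun ω => if 0 ≤ B T ω then Real.pi else -Real.pi)
    (hBmeas : Measurable[ℱ T] (B T))
    (hhalf : μ {ω | 0 ≤ B T ω} = 1 / 2)
    (h0 : ℱ 0 = ⊥)
    (M : ℝ → Ω → ℝ) (hM : ∀ t, M t = μ[η | ℱ t])
    (Solves : (ℝ → Ω → ℝ) → (ℝ → Ω → ℝ) → (ℝ → Ω → ℝ) → Prop)
    -- `dM = U dB` (martingale representation):
    (hMsolves : Solves M (fun _ _ => 0) U)
    -- Itô's formula for `C²` functions of `M`: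
    (hIto : ∀ φ : ℝ → ℝ, ContDiff ℝ 2 φ →
      Solves (fun t ω => φ (M t ω))
        (fun t ω => (1 / 2) * deriv (deriv φ) (M t ω) * (U t ω) ^ 2)
        (fun t ω => deriv φ (M t ω) * U t ω))
    -- adding a constant does not change the dynamics:
    (hshift : ∀ P b σ (c : ℝ), Solves P b σ → Solves (fun t ω => P t ω + c) b σ) :
    (Solves (fun t ω => Real.cos (M t ω) + 1)
        (fun t ω => -(1 / 2) * Real.cos (M t ω) * (U t ω) ^ 2)
        (fun t ω => -Real.sin (M t ω) * U t ω) ∧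
      Solves (fun t ω => Real.sin (M t ω))
        (fun t ω => -(1 / 2) * Real.sin (M t ω) * (U t ω) ^ 2)
        (fun t ω => Real.cos (M t ω) * U t ω)) ∧
    (∀ᵐ ω ∂μ, Real.cos (M T ω) + 1 = 0 ∧ Real.sin (M T ω) = 0) ∧
    ¬ (∀ t ∈ Set.Icc (0 : ℝ) T, ∀ᵐ ω ∂μ,
        Real.cos (M t ω) + 1 = 0 ∧ Real.sin (M t ω) = 0) := by

  -- basic measurability and integrability of η
  have hAmeasT : MeasurableSet[ℱ T] {ω | 0 ≤ B T ω} :=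
    measurableSet_le measurable_const hBmeas
  have hAmeas : MeasurableSet {ω | 0 ≤ B T ω} := (ℱ.le T) _ hAmeasT
  have hηmeasT : StronglyMeasurable[ℱ T] η := by
    rw [hη]
    exact (Measurable.ite hAmeasT measurable_const measurable_const).stronglyMeasurable
  have hη2 : η = fun ω =>
      Set.indicator {ω | 0 ≤ B T ω} (fun _ => 2 * Real.pi) ω + (-Real.pi) := by
    rw [hη]; funext ω
    by_cases h : 0 ≤ B T ω <;> simp [h, Set.indicator_apply] <;> ring
  have hηint : Integrable η μ := by
    rw [hη2]
    exact ((integrable_const (2 * Real.pi)).indicator hAmeas).add (integrable_const _)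
  have hηavg : ∫ ω, η ω ∂μ = 0 := by
    rw [hη2]
    rw [integral_add ((integrable_const (2 * Real.pi)).indicator hAmeas) (integrable_const _)]
    rw [integral_indicator_const _ hAmeas, integral_const, measureReal_def, hhalf]
    simp [ENNReal.toReal_div, smul_eq_mul]
  refine ⟨⟨?_, ?_⟩, ?_, ?_⟩
  · -- Y¹ dynamics
    have h := hIto Real.cos (Real.contDiff_cos.of_le le_top)
    have hd1 : deriv Real.cos = fun x => -Real.sin x := Real.deriv_cos'
    have hd2 : deriv (deriv Real.cos) = fun x => -Real.cos x := by
      rw [hd1]; funext x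
      rw [deriv.fun_neg, Real.deriv_sin]
    rw [hd2, hd1] at h
    have h' := hshift _ _ _ 1 h
    have e1 : (fun t ω => -(1 / 2) * Real.cos (M t ω) * U t ω ^ 2)
        = (fun t ω => 1 / 2 * -Real.cos (M t ω) * U t ω ^ 2) := by
      funext t ω; ring
    rw [e1]; exact h'
  · have h := hIto Real.sin (Real.contDiff_sin.of_le le_top)
    have hd1 : deriv Real.sin = Real.cos := Real.deriv_sin
    have hd2 : deriv (deriv Real.sin) = fun x => -Real.sin x := by
      rw [hd1]; exact Real.deriv_cos'
    rw [hd2, hd1] at h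
    have e1 : (fun t ω => -(1 / 2) * Real.sin (M t ω) * U t ω ^ 2)
        = (fun t ω => 1 / 2 * -Real.sin (M t ω) * U t ω ^ 2) := by
      funext t ω; ring
    rw [e1]; exact h
  · -- terminal value
    have hMT : M T = η := by
      rw [hM T]
      exact condExp_of_stronglyMeasurable (ℱ.le T) hηmeasT hηint
    refine Filter.Eventually.of_forall fun ω => ?_
    rw [hMT, hη]
    by_cases h : 0 ≤ B T ω <;> simp [h, Real.cos_pi, Real.sin_pi]
  · -- non-triviality at t = 0
    intro H
    have h0' := H 0 ⟨le_refl _, le_of_lt hT⟩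
    have hM0 : M 0 = fun _ => 0 := by
      rw [hM 0, h0, condExp_bot, hηavg]
    rw [hM0] at h0'
    obtain ⟨ω, hω, -⟩ := h0'.exists
    simp at hω
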